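/- For all t, l ∈ ℂ, the operators E_t = t(-∂_z + 1/(2z)) - l/(2z), F_t = t(z²∂_z + z/2) - (l/2)z, H_t = -2z∂_z on ℂ[z,z⁻¹] satisfy the contracted commutation relations [H_t,E_t] = 2E_t, [H_t,F_t] = -2F_t, [E_t,F_t] = t²H_t. -/
import Mathlib


/-- Operator on Laurent polynomials (basis `z^n`, encoded as `ℤ →₀ ℂ`) sending
`z^p` to `a p • z^(p+s)`. -/
noncomputable def sop (a : ℤ → ℂ) (s : ℤ) : Module.End ℂ (ℤ →₀ ℂ) :=
  Finsupp.lsum ℂ fun p => a p • Finsupp.lsingle (p + s)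

/-- `E_t = t(-∂_z + 1/(2z)) - l/(2z)` : `z^n ↦ (t(-n + 1/2) - l/2) z^(n-1)`. -/
noncomputable def Et (t l : ℂ) : Module.End ℂ (ℤ →₀ ℂ) :=
  sop (fun n => t * (-(n : ℂ) + 1 / 2) - l / 2) (-1)
/-- `F_t = t(z² ∂_z + z/2) - (l/2) z` : `z^n ↦ (t(n + 1/2) - l/2) z^(n+1)`. -/
noncomputable def Ft (t l : ℂ) : Module.End ℂ (ℤ →₀ ℂ) :=
  sop (fun n => t * ((n : ℂ) + 1 / 2) - l / 2) 1
/-- `H_t = -2 z ∂_z`. -/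
noncomputable def Ht : Module.End ℂ (ℤ →₀ ℂ) := sop (fun n => -2 * (n : ℂ)) 0

lemma sop_single (a : ℤ → ℂ) (s p : ℤ) (c : ℂ) :
    sop a s (Finsupp.single p c) = Finsupp.single (p + s) (a p * c) := by
  rw [sop, Finsupp.lsum_single, LinearMap.smul_apply, Finsupp.lsingle_apply,
    Finsupp.smul_single, smul_eq_mul]

theorem contracted_twisted_relations (t l : ℂ) :
    Ht * Et t l - Et t l * Ht = (2 : ℂ) • Et t l ∧
    Ht * Ft t l - Ft t l * Ht = (-2 : ℂ) • Ft t l ∧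
    Et t l * Ft t l - Ft t l * Et t l = t ^ 2 • Ht := by
  refine ⟨?_, ?_, ?_⟩ <;>
  · apply Finsupp.lhom_ext' (fun p => ?_)
    apply LinearMap.ext_ring
    simp only [LinearMap.coe_comp, Function.comp_apply, Finsupp.lsingle_apply,
      LinearMap.sub_apply, Module.End.mul_apply, LinearMap.smul_apply,
      Et, Ft, Ht, sop_single, Finsupp.smul_single, smul_eq_mul]
    have h1 : p + -1 + 0 = p + -1 := by ring
    have h2 : p + 0 + -1 = p + -1 := by ring
    have h3 : p + 1 + 0 = p + 1 := by ring
    have h4 : p + 0 + 1 = p + 1 := by ring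
    have h5 : p + -1 + 1 = p + 0 := by ring
    have h6 : p + 1 + -1 = p + 0 := by ring
    first
      | rw [h1, h2] | rw [h3, h4] | rw [h5, h6]
    rw [← Finsupp.single_sub]
    congr 1
    push_cast
    ring
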